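/- arXiv:1608.00849 — 2 statements merged into one kernel-verified Lean document; each statement's English description precedes it below -/
import Mathlib

section
/- Let f_v, N_v, y be natural numbers with f_v ≥ 1, N_v ≥ 3·f_v + 1 and 1 ≤ y ≤ f_v. Then the real-valued product ∏_{j=1}^{y} (f_v − (j−1)) / (N_v − (j−1)) is strictly less than 3^{−y}. -/
/-- Liveness key inequality: under the Byzantine threshold `N_v ≥ 3 f_v + 1`,
the probability of `y` failed attempts in a row,
`∏_{j=1}^{y} (f_v − (j−1)) / (N_v − (j−1))`, is strictly less than `3^{-y}`. -/
theorem ddemos_liveness_attempt_product_lt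
    (f_v N_v y : ℕ) (hf : 1 ≤ f_v) (hN : 3 * f_v + 1 ≤ N_v)
    (hy1 : 1 ≤ y) (hy2 : y ≤ f_v) :
    ∏ j ∈ Finset.range y, (((f_v : ℝ) - j) / ((N_v : ℝ) - j)) < (3 : ℝ) ^ (-(y : ℤ)) := by
  have key : ∏ j ∈ Finset.range y, (((f_v : ℝ) - j) / ((N_v : ℝ) - j))
      < ∏ _j ∈ Finset.range y, (1/3 : ℝ) := by
    apply Finset.prod_lt_prod_of_nonempty
    · intro j hj
      have hj' : j < y := Finset.mem_range.mp hj
      have h1 : (j : ℝ) < f_v := by exact_mod_cast lt_of_lt_of_le hj' hy2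
      have h2 : (j : ℝ) < N_v := by
        have : j < N_v := lt_of_lt_of_le (lt_of_lt_of_le hj' hy2) (by omega)
        exact_mod_cast this
      exact div_pos (by linarith) (by linarith)
    · intro j hj
      have hj' : j < y := Finset.mem_range.mp hj
      have h1 : (j : ℝ) < f_v := by exact_mod_cast lt_of_lt_of_le hj' hy2
      have h2 : (j : ℝ) < N_v := by
        have : j < N_v := lt_of_lt_of_le (lt_of_lt_of_le hj' hy2) (by omega)
        exact_mod_cast this
      rw [div_lt_div_iff₀ (by linarith) (by norm_num)]
      have h3 : 3 * (f_v : ℝ) + 1 ≤ N_v := by exact_mod_cast hN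
      have hj0 : (0:ℝ) ≤ j := Nat.cast_nonneg j
      linarith
    · exact Finset.nonempty_range_iff.mpr (by omega)
  have : ∏ _j ∈ Finset.range y, (1/3 : ℝ) = (3:ℝ) ^ (-(y:ℤ)) := by
    rw [Finset.prod_const, Finset.card_range, zpow_neg, one_div, inv_pow, zpow_natCast]
  linarith [key, this ▸ key]
end

section
/- Let q be a prime, let p₁ and p₂ be distinct univariate polynomials over ZMod q of degrees at most d₁ and d₂ respectively, let κ be a real number, and let D be a probability mass function on ZMod q such that D(x) ≤ 2^{−κ} for every x ∈ ZMod q. Then the probability under D of the event {x : p₁(x) = p₂(x)} is at most max(d₁, d₂)·2^{−κ}. -/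
open scoped ENNReal

/-- Min-entropy Schwartz–Zippel, polynomial-equality-test form: if `p₁ ≠ p₂` are
polynomials over `ZMod q` of degrees at most `d₁`, `d₂` and `D` is a PMF on
`ZMod q` with `D x ≤ 2^{-κ}` for all `x`, then the probability of
`{x : p₁(x) = p₂(x)}` under `D` is at most `max(d₁,d₂) · 2^{-κ}`. -/
theorem min_entropy_schwartz_zippel_eq_test
    (q : ℕ) (hq : q.Prime) (d₁ d₂ : ℕ) (p₁ p₂ : Polynomial (ZMod q))
    (hne : p₁ ≠ p₂) (hd₁ : p₁.degree ≤ d₁) (hd₂ : p₂.degree ≤ d₂)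
    (κ : ℝ) (D : PMF (ZMod q))
    (hD : ∀ x : ZMod q, D x ≤ (2 : ℝ≥0∞) ^ (-κ)) :
    D.toOuterMeasure {x : ZMod q | Polynomial.eval x p₁ = Polynomial.eval x p₂}
      ≤ (max d₁ d₂ : ℝ≥0∞) * (2 : ℝ≥0∞) ^ (-κ) := by
  haveI := Fact.mk hq
  set p := p₁ - p₂ with hp_def
  have hp : p ≠ 0 := sub_ne_zero.mpr hne
  have hsub : {x : ZMod q | Polynomial.eval x p₁ = Polynomial.eval x p₂}
      ⊆ ↑p.roots.toFinset := by
    intro x hx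
    simp only [Set.mem_setOf_eq] at hx
    simp only [Finset.coe_sort_coe, Multiset.mem_toFinset, Polynomial.mem_roots, hp,
      ne_eq, not_false_eq_true, true_and, Finset.mem_coe]
    simpa [Polynomial.IsRoot, hp_def, sub_eq_zero] using hx
  have hcard : (p.roots.toFinset.card : ℝ≥0∞) ≤ (max d₁ d₂ : ℕ) := by
    have h1 : p.roots.toFinset.card ≤ p.natDegree := by
      calc p.roots.toFinset.card ≤ Multiset.card p.roots := p.roots.toFinset_card_le
        _ ≤ p.natDegree := p.card_roots'
    have h2 : p.natDegree ≤ max d₁ d₂ := by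
      rw [Polynomial.natDegree_le_iff_degree_le]
      calc p.degree ≤ max p₁.degree p₂.degree := Polynomial.degree_sub_le _ _
        _ ≤ (max d₁ d₂ : ℕ) := by
          rw [max_le_iff]
          constructor
          · exact hd₁.trans (by exact_mod_cast Nat.cast_le.mpr (le_max_left d₁ d₂))
          · exact hd₂.trans (by exact_mod_cast Nat.cast_le.mpr (le_max_right d₁ d₂))
    exact_mod_cast h1.trans h2
  rw [PMF.toOuterMeasure_apply]
  calc ∑' x, Set.indicator _ D x
      ≤ ∑' x, Set.indicator (↑p.roots.toFinset : Set (ZMod q)) D x :=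
        ENNReal.tsum_le_tsum fun x => Set.indicator_le_indicator_of_subset hsub (by simp) x
    _ = ∑ x ∈ p.roots.toFinset, D x := by
        rw [tsum_eq_sum (f := Set.indicator _ D) (s := p.roots.toFinset)]
        · exact Finset.sum_congr rfl fun x hx => Set.indicator_of_mem (by simpa using hx) D
        · intro x hx; exact Set.indicator_of_notMem (by simpa using hx) D
    _ ≤ ∑ _x ∈ p.roots.toFinset, (2 : ℝ≥0∞) ^ (-κ) := Finset.sum_le_sum fun x _ => hD x
    _ = (p.roots.toFinset.card : ℝ≥0∞) * (2 : ℝ≥0∞) ^ (-κ) := by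
        simp [Finset.sum_const, nsmul_eq_mul]
    _ ≤ (max d₁ d₂ : ℝ≥0∞) * (2 : ℝ≥0∞) ^ (-κ) := by
        exact mul_le_mul_left (by simpa [Nat.cast_max] using hcard) _
end
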